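/- Let t ≥ 1 be a real number, G a t-tough graph on n ≥ 3 vertices, and C a cycle of G that is not hamiltonian. If a vertex x ∈ V(G) \ V(C) has more than n/(t+1) − 1 neighbors on C, then G has a cycle C′ with vertex set V(C) ∪ {x}. -/

import Mathlib

open SimpleGraph

/-- The number of connected components of `G − S`. -/
noncomputable def numComp {V : Type*} (G : SimpleGraph V) (S : Set V) : ℕ :=
  Nat.card (G.induce Sᶜ).ConnectedComponent

/-- `G` is `t`-tough: every cutset `S` satisfies `|S| ≥ t · c(G − S)`. -/
def Tough {V : Type*} (t : ℝ) (G : SimpleGraph V) : Prop :=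
  ∀ S : Set V, 2 ≤ numComp G S → t * (numComp G S : ℝ) ≤ (S.ncard : ℝ)

/-- `G` contains no induced copy of `H`. -/
def InducedFree {W V : Type*} (H : SimpleGraph W) (G : SimpleGraph V) : Prop :=
  ¬ ∃ f : W ↪ V, ∀ a b : W, G.Adj (f a) (f b) ↔ H.Adj a b

/-- `P₃ ∪ P₁`: a path on three vertices plus one isolated vertex. -/
def P3UnionP1 : SimpleGraph (Fin 4) := SimpleGraph.fromEdgeSet {s(0, 1), s(1, 2)}

/-- `P₃ ∪ 2P₁`: a path on three vertices plus two isolated vertices. -/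
def P3Union2P1 : SimpleGraph (Fin 5) := SimpleGraph.fromEdgeSet {s(0, 1), s(1, 2)}

lemma split_at_dart {V : Type*} {G : SimpleGraph V} :
    ∀ {s t : V} (W : G.Walk s t) (δ : G.Dart), δ ∈ W.darts →
    ∃ (W1 : G.Walk s δ.fst) (W2 : G.Walk δ.snd t),
      W = W1.append (Walk.cons δ.adj W2) := by
  intro s t W
  induction W with
  | nil => intro δ h; simp [Walk.darts] at h
  | cons h p ih =>
      intro δ hδ
      rw [Walk.darts_cons, List.mem_cons] at hδ
      rcases hδ with hδ | hδ
      · subst hδ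
        exact ⟨Walk.nil, p, rfl⟩
      · obtain ⟨W1, W2, hW⟩ := ih δ hδ
        exact ⟨Walk.cons h W1, W2, by rw [hW]; rfl⟩

lemma case1 {V : Type*} {G : SimpleGraph V} {c0 x : V} (C : G.Walk c0 c0)
    (hC : C.IsCycle) (hx : x ∉ C.support) (δ : G.Dart) (hδ : δ ∈ C.darts)
    (hxv : G.Adj x δ.fst) (hxu : G.Adj x δ.snd) :
    ∃ (z : V) (C' : G.Walk z z), C'.IsCycle ∧
      {v : V | v ∈ C'.support} = {v : V | v ∈ C.support} ∪ {x} := by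
  obtain ⟨W1, W2, hW⟩ := split_at_dart C δ hδ
  set P : G.Walk δ.snd x := (W2.append W1).concat hxv.symm with hP
  refine ⟨x, Walk.cons hxu P, ?_, ?_⟩
  · have hCsup : C.support = W1.support ++ W2.support := by
      rw [hW, Walk.support_append]; rfl
    have htail : (W1.support.tail ++ W2.support).Nodup := by
      have h2 := hC.support_nodup
      rwa [hCsup, List.tail_append_of_ne_nil (Walk.support_ne_nil _)] at h2
    have hPsup : P.support = (W2.support ++ W1.support.tail) ++ [x] := by
      rw [hP, Walk.support_concat, Walk.support_append]
    have hxW1 : x ∉ W1.support := fun h => hx (by rw [hCsup]; exact List.mem_append_left _ h)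
    have hxW2 : x ∉ W2.support := fun h => hx (by rw [hCsup]; exact List.mem_append_right _ h)
    rw [Walk.cons_isCycle_iff]
    constructor
    · apply Walk.IsPath.mk'
      have hperm : P.support.Perm (x :: (W1.support.tail ++ W2.support)) := by
        rw [hPsup]
        refine (List.perm_append_singleton _ _).trans ?_
        exact List.Perm.cons _ (List.perm_append_comm)
      rw [hperm.nodup_iff, List.nodup_cons]
      refine ⟨?_, htail⟩
      intro hmem
      rcases List.mem_append.mp hmem with h | h
      · exact hxW1 (List.mem_of_mem_tail h)
      · exact hxW2 h
    · intro hmem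
      rw [hP, Walk.edges_concat, List.concat_eq_append, List.mem_append] at hmem
      rcases hmem with hmem | hmem
      · rw [Walk.edges_append, List.mem_append] at hmem
        rcases hmem with hmem | hmem
        · exact hxW2 (Walk.fst_mem_support_of_mem_edges _ hmem)
        · exact hxW1 (Walk.fst_mem_support_of_mem_edges _ hmem)
      · rw [List.mem_singleton, Sym2.eq_iff] at hmem
        rcases hmem with ⟨h1, h2⟩ | ⟨h1, h2⟩
        · exact hx (by rw [hCsup]; exact List.mem_append_left _ (h1 ▸ Walk.end_mem_support W1))
        · exact (G.ne_of_adj δ.adj) h2.symm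
  · have hCsup : C.support = W1.support ++ W2.support := by
      rw [hW, Walk.support_append]; rfl
    have hPsup : P.support = (W2.support ++ W1.support.tail) ++ [x] := by
      rw [hP, Walk.support_concat, Walk.support_append]
    have hc0 : c0 ∈ W2.support := Walk.end_mem_support W2
    have hW1 : W1.support = c0 :: W1.support.tail := (Walk.support_eq_cons W1)
    ext v
    simp only [Set.mem_setOf_eq, Walk.support_cons, List.mem_cons, hPsup, hCsup,
      List.mem_append, List.mem_singleton, Set.mem_union, Set.mem_singleton_iff,
      List.not_mem_nil, or_false]
    constructor
    · rintro (h | (h | h) | h)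
      · right; exact h
      · left; right; exact h
      · left; left; rw [hW1]; exact List.mem_cons_of_mem _ h
      · right; exact h
    · rintro ((h | h) | h)
      · rw [hW1, List.mem_cons] at h
        rcases h with h | h
        · right; left; left; exact h ▸ hc0
        · right; left; right; exact h
      · right; left; left; exact h
      · left; exact h

section CycleSurgery
open List in
lemma case2_aux {V : Type*} {G : SimpleGraph V} {c0 x a b c d : V}
    (hab : G.Adj a b) (hcd : G.Adj c d) (W1 : G.Walk c0 a) (W3 : G.Walk b c) (W4 : G.Walk d c0)
    (hC : (W1.append (Walk.cons hab (W3.append (Walk.cons hcd W4)))).IsCycle)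
    (hx : x ∉ (W1.append (Walk.cons hab (W3.append (Walk.cons hcd W4)))).support)
    (hxa : G.Adj x a) (hxc : G.Adj x c) (hbd : G.Adj b d) (hac : a ≠ c) :
    ∃ (z : V) (C' : G.Walk z z), C'.IsCycle ∧
      {v : V | v ∈ C'.support} =
        {v : V | v ∈ (W1.append (Walk.cons hab (W3.append (Walk.cons hcd W4)))).support} ∪ {x} := by
  set CW : G.Walk c0 c0 := W1.append (Walk.cons hab (W3.append (Walk.cons hcd W4))) with hCW
  set R : G.Walk a x :=
    W1.reverse.append (W4.reverse.append (Walk.cons hbd.symm (W3.concat hxc.symm))) with hR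
  set A := W1.support with hA
  set B := W3.support with hB
  set D := W4.support with hD
  set Dr : List V := W4.reverse.support.tail with hDr
  have hCsup : CW.support = A ++ (B ++ D) := by
    simp [hCW, Walk.support_append, hA, hB, hD]
  have hCtail : CW.support.tail = A.tail ++ (B ++ D) := by
    rw [hCsup, List.tail_append_of_ne_nil (by rw [hA]; exact Walk.support_ne_nil _)]
  have hRsup : R.support = A.reverse ++ (Dr ++ (B ++ [x])) := by
    simp [hR, Walk.support_append, Walk.support_reverse, Walk.support_concat,
      List.concat_eq_append, hA, hB, hDr, Walk.support_reverse]
  have hAc : A = c0 :: A.tail := Walk.support_eq_cons W1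
  have hDrc : W4.support.reverse = c0 :: Dr := by
    rw [← Walk.support_reverse]; exact Walk.support_eq_cons _
  have hDperm : D.Perm (c0 :: Dr) := by
    rw [← hDrc, hD]; exact (List.reverse_perm _).symm
  -- the key permutation
  have hperm : R.support.Perm (x :: CW.support.tail) := by
    rw [hRsup, hCtail]
    calc A.reverse ++ (Dr ++ (B ++ [x]))
        ~ A ++ (Dr ++ (B ++ [x])) := (List.reverse_perm _).append (List.Perm.refl _)
      _ ~ A ++ (Dr ++ (x :: B)) :=
          List.Perm.append_left _ (List.Perm.append_left _ (List.perm_append_singleton _ _))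
      _ ~ A ++ (x :: (Dr ++ B)) := List.Perm.append_left _ List.perm_middle
      _ ~ x :: (A ++ (Dr ++ B)) := List.perm_middle
      _ ~ x :: (A.tail ++ (B ++ D)) := by
          refine List.Perm.cons _ ?_
          calc A ++ (Dr ++ B)
              = c0 :: (A.tail ++ (Dr ++ B)) := by rw [hAc]; rfl
            _ ~ A.tail ++ (c0 :: (Dr ++ B)) := List.perm_middle.symm
            _ ~ A.tail ++ (c0 :: (B ++ Dr)) :=
                List.Perm.append_left _ (List.Perm.cons _ List.perm_append_comm)
            _ ~ A.tail ++ (B ++ (c0 :: Dr)) :=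
                List.Perm.append_left _ List.perm_middle.symm
            _ ~ A.tail ++ (B ++ D) :=
                List.Perm.append_left _ (List.Perm.append_left _ hDperm.symm)
  have hc0tail : c0 ∈ CW.support.tail := by
    rw [hCtail]
    exact List.mem_append_right _ (List.mem_append_right _ (Walk.end_mem_support W4))
  have hxtail : x ∉ CW.support.tail := fun h => hx (List.mem_of_mem_tail h)
  have hbC : b ∈ CW.support := by
    rw [hCsup]; exact List.mem_append_right _ (List.mem_append_left _ (Walk.start_mem_support W3))
  have hdC : d ∈ CW.support := by
    rw [hCsup]
    exact List.mem_append_right _ (List.mem_append_right _ (Walk.start_mem_support W4))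
  have hcC : c ∈ CW.support := by
    rw [hCsup]; exact List.mem_append_right _ (List.mem_append_left _ (Walk.end_mem_support W3))
  have hxA : x ∉ A := fun h => hx (by rw [hCsup]; exact List.mem_append_left _ h)
  have hxB : x ∉ B := fun h => hx (by
    rw [hCsup]; exact List.mem_append_right _ (List.mem_append_left _ h))
  have hxD : x ∉ D := fun h => hx (by
    rw [hCsup]; exact List.mem_append_right _ (List.mem_append_right _ h))
  refine ⟨x, Walk.cons hxa R, ?_, ?_⟩
  · rw [Walk.cons_isCycle_iff]
    constructor
    · apply Walk.IsPath.mk'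
      rw [hperm.nodup_iff, List.nodup_cons]
      exact ⟨hxtail, hC.support_nodup⟩
    · -- s(x, a) ∉ R.edges
      intro hmem
      have hRedges : R.edges =
          W1.reverse.edges ++ (W4.reverse.edges ++ (s(d, b) :: (W3.edges ++ [s(c, x)]))) := by
        simp [hR, Walk.edges_append, Walk.edges_concat, List.concat_eq_append]
      rw [hRedges, List.mem_append] at hmem
      rcases hmem with hmem | hmem
      · have := Walk.fst_mem_support_of_mem_edges _ hmem
        rw [Walk.support_reverse, List.mem_reverse] at this
        exact hxA this
      · rw [List.mem_append] at hmem
        rcases hmem with hmem | hmem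
        · have := Walk.fst_mem_support_of_mem_edges _ hmem
          rw [Walk.support_reverse, List.mem_reverse] at this
          exact hxD this
        · rw [List.mem_cons] at hmem
          rcases hmem with hmem | hmem
          · rw [Sym2.eq_iff] at hmem
            rcases hmem with ⟨h1, _⟩ | ⟨h1, _⟩
            · exact hx (h1 ▸ hdC)
            · exact hx (h1 ▸ hbC)
          · rw [List.mem_append] at hmem
            rcases hmem with hmem | hmem
            · exact hxB (Walk.fst_mem_support_of_mem_edges _ hmem)
            · rw [List.mem_singleton, Sym2.eq_iff] at hmem
              rcases hmem with ⟨h1, _⟩ | ⟨_, h2⟩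
              · exact hx (h1 ▸ hcC)
              · exact hac h2
  · ext v
    simp only [Set.mem_setOf_eq, Walk.support_cons, List.mem_cons, Set.mem_union,
      Set.mem_singleton_iff]
    rw [hperm.mem_iff, List.mem_cons]
    have hCc : CW.support = c0 :: CW.support.tail := Walk.support_eq_cons CW
    constructor
    · rintro (h | h | h)
      · right; exact h
      · right; exact h
      · left; rw [hCc]; exact List.mem_cons_of_mem _ h
    · rintro (h | h)
      · rw [hCc, List.mem_cons] at h
        rcases h with h | h
        · right; right; exact h ▸ hc0tail
        · right; right; exact h
      · left; exact h

end CycleSurgery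

lemma case2 {V : Type*} {G : SimpleGraph V} {c0 x : V} (C : G.Walk c0 c0)
    (hC : C.IsCycle) (hx : x ∉ C.support) (δ1 δ2 : G.Dart)
    (h1 : δ1 ∈ C.darts) (h2 : δ2 ∈ C.darts) (hne : δ1.fst ≠ δ2.fst)
    (hx1 : G.Adj x δ1.fst) (hx2 : G.Adj x δ2.fst) (hbd : G.Adj δ1.snd δ2.snd) :
    ∃ (z : V) (C' : G.Walk z z), C'.IsCycle ∧
      {v : V | v ∈ C'.support} = {v : V | v ∈ C.support} ∪ {x} := by
  obtain ⟨W1, W2, hW⟩ := split_at_dart C δ1 h1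
  have h2' : δ2 ∈ W1.darts ∨ δ2 ∈ W2.darts := by
    rw [hW, Walk.darts_append, Walk.darts_cons, List.mem_append, List.mem_cons] at h2
    rcases h2 with h | h | h
    · exact Or.inl h
    · subst h; exact absurd rfl hne
    · exact Or.inr h
  rcases h2' with hin | hin
  · obtain ⟨W3, W4, hW1⟩ := split_at_dart W1 δ2 hin
    have hC' : C = W3.append (Walk.cons δ2.adj (W4.append (Walk.cons δ1.adj W2))) := by
      rw [hW, hW1, ← Walk.append_assoc, Walk.cons_append]
    rw [hC'] at hC hx ⊢
    exact case2_aux δ2.adj δ1.adj W3 W4 W2 hC hx hx2 hx1 hbd.symm hne.symm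
  · obtain ⟨W3, W4, hW2⟩ := split_at_dart W2 δ2 hin
    have hC' : C = W1.append (Walk.cons δ1.adj (W3.append (Walk.cons δ2.adj W4))) := by
      rw [hW, hW2]
    rw [hC'] at hC hx ⊢
    exact case2_aux δ1.adj δ2.adj W1 W3 W4 hC hx hx1 hx2 hbd hne

lemma numComp_indep {V : Type*} [Fintype V] (G : SimpleGraph V) (T : Set V)
    (h : ∀ u ∈ T, ∀ w ∈ T, ¬ G.Adj u w) : numComp G Tᶜ = T.ncard := by
  unfold numComp
  rw [compl_compl, ← Nat.card_coe_set_eq]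
  refine (Nat.card_eq_of_bijective (G.induce T).connectedComponentMk ⟨?_, ?_⟩).symm
  · intro a b hab
    obtain ⟨w⟩ := (SimpleGraph.ConnectedComponent.eq).mp hab
    cases w with
    | nil => rfl
    | cons hadj _ =>
        exact absurd ((SimpleGraph.comap_adj.mp hadj)) (h _ (Subtype.coe_prop _) _ (Subtype.coe_prop _))
  · exact fun c => c.exists_rep

/-- If `C` is a nonhamiltonian cycle of a `t`-tough graph (`t ≥ 1`, `n ≥ 3`) and a vertex `x`
off `C` has more than `n/(t+1) − 1` neighbors on `C`, then `G` has a cycle on `V(C) ∪ {x}`. -/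
theorem stmt_7 {V : Type*} [Fintype V] [DecidableEq V] (G : SimpleGraph V) (t : ℝ)
    (ht : 1 ≤ t) (htough : Tough t G) (hcard : 3 ≤ Fintype.card V)
    (c0 : V) (C : G.Walk c0 c0) (hC : C.IsCycle) (hnonham : ¬ ∀ v : V, v ∈ C.support)
    (x : V) (hx : x ∉ C.support)
    (hdeg : (Fintype.card V : ℝ) / (t + 1) - 1 < ({v : V | v ∈ C.support ∧ G.Adj x v}.ncard : ℝ)) :
    ∃ (z : V) (C' : G.Walk z z), C'.IsCycle ∧
      {v : V | v ∈ C'.support} = {v : V | v ∈ C.support} ∪ {x} := by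
  classical
  by_contra hcon
  have key1 : ∀ δ : G.Dart, δ ∈ C.darts → G.Adj x δ.fst → ¬ G.Adj x δ.snd :=
    fun δ hδ ha hb => hcon (case1 C hC hx δ hδ ha hb)
  have key2 : ∀ δ1 δ2 : G.Dart, δ1 ∈ C.darts → δ2 ∈ C.darts → δ1.fst ≠ δ2.fst →
      G.Adj x δ1.fst → G.Adj x δ2.fst → ¬ G.Adj δ1.snd δ2.snd :=
    fun δ1 δ2 h1 h2 hne ha hb hadj => hcon (case2 C hC hx δ1 δ2 h1 h2 hne ha hb hadj)
  set LD : List G.Dart := C.darts.filter (fun δ => decide (G.Adj x δ.fst)) with hLD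
  have hmemLD : ∀ δ : G.Dart, δ ∈ LD ↔ δ ∈ C.darts ∧ G.Adj x δ.fst := by
    intro δ; rw [hLD, List.mem_filter]; simp
  set LU : List V := LD.map (fun δ => δ.snd) with hLU
  set LA : List V := LD.map (fun δ => δ.fst) with hLA
  have ht1 : (0:ℝ) < t + 1 := by linarith
  -- decomposition of the support of a cycle
  have htail_ne : C.support.tail ≠ [] := by
    intro h
    have h2 : C.support.length = C.length + 1 := Walk.length_support C
    have h3 : C.support.length ≤ 1 := by rw [C.support_eq_cons, h]; simp
    have := hC.three_le_length
    omega
  have hgetLast : C.support.tail.getLast htail_ne = c0 := by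
    rw [List.getLast_tail]; exact C.getLast_support
  have htl : C.support.tail = C.support.tail.dropLast ++ [c0] := by
    conv_lhs => rw [← List.dropLast_append_getLast htail_ne]
    rw [hgetLast]
  have hdropLast : C.support.dropLast = c0 :: C.support.tail.dropLast := by
    conv_lhs => rw [C.support_eq_cons, htl, ← List.cons_append, List.dropLast_concat]
  have hdropLast_nodup : C.support.dropLast.Nodup := by
    rw [hdropLast]
    have h2 := hC.support_nodup
    rw [htl, List.nodup_append] at h2
    exact List.nodup_cons.mpr ⟨fun hmem => h2.2.2 c0 hmem c0 (List.mem_singleton_self c0) rfl, h2.1⟩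
  have hLA_nodup : LA.Nodup := by
    refine ((List.filter_sublist).map (fun δ : G.Dart => δ.fst)).nodup ?_
    have : C.darts.map (fun δ : G.Dart => δ.fst) = C.support.dropLast := Walk.map_fst_darts C
    rw [this]; exact hdropLast_nodup
  have hLU_nodup : LU.Nodup := by
    refine ((List.filter_sublist).map (fun δ : G.Dart => δ.snd)).nodup ?_
    have : C.darts.map (fun δ : G.Dart => δ.snd) = C.support.tail := Walk.map_snd_darts C
    rw [this]; exact hC.support_nodup
  have hA_eq : {v : V | v ∈ C.support ∧ G.Adj x v} = {v : V | v ∈ LA} := by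
    ext v
    simp only [Set.mem_setOf_eq, hLA, List.mem_map]
    constructor
    · rintro ⟨hv, hadj⟩
      have hv' : v ∈ C.support.dropLast := by
        rw [C.support_eq_cons, List.mem_cons] at hv
        rw [hdropLast, List.mem_cons]
        rcases hv with h | h
        · exact Or.inl h
        · rw [htl, List.mem_append, List.mem_singleton] at h
          rcases h with h | h
          · exact Or.inr h
          · exact Or.inl h
      rw [← Walk.map_fst_darts, List.mem_map] at hv'
      obtain ⟨δ, hδ, rfl⟩ := hv'
      exact ⟨δ, (hmemLD δ).mpr ⟨hδ, hadj⟩, rfl⟩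
    · rintro ⟨δ, hδ, rfl⟩
      obtain ⟨h1, h2⟩ := (hmemLD δ).mp hδ
      exact ⟨Walk.dart_fst_mem_support_of_mem_darts _ h1, h2⟩
  have hAncard : {v : V | v ∈ C.support ∧ G.Adj x v}.ncard = LD.length := by
    rw [hA_eq]
    have h1 : {v : V | v ∈ LA} = ↑LA.toFinset := by ext v; simp
    rw [h1, Set.ncard_coe_finset, List.toFinset_card_of_nodup hLA_nodup, hLA, List.length_map]
  rw [hAncard] at hdeg
  have hsum : ∀ T : Set V, T.ncard + Tᶜ.ncard = Fintype.card V := by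
    intro T
    rw [← Nat.card_eq_fintype_card]
    exact Set.ncard_add_ncard_compl T
  by_cases hnil : LD = []
  · -- x has no neighbor on C
    have hdeg0 : (Fintype.card V : ℝ) / (t + 1) < 1 := by
      rw [hnil] at hdeg; simp at hdeg; linarith
    have hnlt : (Fintype.card V : ℝ) < t + 1 := (div_lt_one ht1).mp hdeg0
    have hnadj : ¬ G.Adj x c0 := by
      intro hadj
      have : c0 ∈ {v : V | v ∈ C.support ∧ G.Adj x v} := ⟨C.start_mem_support, hadj⟩
      rw [hA_eq, hLA, hnil] at this
      simp at this
    have hxc0 : x ≠ c0 := fun h => hx (h ▸ C.start_mem_support)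
    have hindep : ∀ u ∈ ({x, c0} : Set V), ∀ w ∈ ({x, c0} : Set V), ¬ G.Adj u w := by
      intro u hu w hw hadj
      rcases hu with rfl | hu
      · rcases hw with rfl | hw
        · exact hadj.ne rfl
        · rw [Set.mem_singleton_iff] at hw; subst hw; exact hnadj hadj
      · rw [Set.mem_singleton_iff] at hu; subst hu
        rcases hw with rfl | hw
        · exact hnadj hadj.symm
        · rw [Set.mem_singleton_iff] at hw; subst hw; exact hadj.ne rfl
    have hcomp := numComp_indep G {x, c0} hindep
    have hcard2 : ({x, c0} : Set V).ncard = 2 := Set.ncard_pair hxc0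
    rw [hcard2] at hcomp
    have htough' := htough ({x, c0} : Set V)ᶜ (by rw [hcomp])
    rw [hcomp] at htough'
    have hsum2 := hsum {x, c0}
    rw [hcard2] at hsum2
    have hcompl : ((({x, c0} : Set V)ᶜ).ncard : ℝ) = (Fintype.card V : ℝ) - 2 := by
      have : (2 + (({x, c0} : Set V)ᶜ).ncard : ℝ) = (Fintype.card V : ℝ) := by
        exact_mod_cast congrArg (Nat.cast : ℕ → ℝ) hsum2
      linarith
    rw [hcompl] at htough'
    have hcard3 : (3 : ℝ) ≤ (Fintype.card V : ℝ) := by exact_mod_cast hcard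
    push_cast at htough'
    linarith
  · -- x has at least one neighbor on C
    have hk1 : 1 ≤ LD.length := List.length_pos_iff.mpr hnil
    set T : Set V := insert x {v : V | v ∈ LU} with hT
    have hxU : x ∉ {v : V | v ∈ LU} := by
      intro hmem
      rw [Set.mem_setOf_eq, hLU, List.mem_map] at hmem
      obtain ⟨δ, hδ, heq⟩ := hmem
      exact hx (heq ▸ Walk.dart_snd_mem_support_of_mem_darts _ ((hmemLD δ).mp hδ).1)
    have hUcard : {v : V | v ∈ LU}.ncard = LD.length := by
      have h1 : {v : V | v ∈ LU} = ↑LU.toFinset := by ext v; simp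
      rw [h1, Set.ncard_coe_finset, List.toFinset_card_of_nodup hLU_nodup, hLU, List.length_map]
    have hTcard : T.ncard = LD.length + 1 := by
      rw [hT, Set.ncard_insert_of_notMem hxU, hUcard]
    have hindep : ∀ u ∈ T, ∀ w ∈ T, ¬ G.Adj u w := by
      intro u hu w hw hadj
      rw [hT, Set.mem_insert_iff] at hu hw
      rcases hu with rfl | hu
      · rcases hw with rfl | hw
        · exact hadj.ne rfl
        · rw [Set.mem_setOf_eq, hLU, List.mem_map] at hw
          obtain ⟨δ, hδ, rfl⟩ := hw
          obtain ⟨hd1, hd2⟩ := (hmemLD δ).mp hδ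
          exact key1 δ hd1 hd2 hadj
      · rw [Set.mem_setOf_eq, hLU, List.mem_map] at hu
        obtain ⟨δ1, hδ1, rfl⟩ := hu
        obtain ⟨hd1, hd2⟩ := (hmemLD δ1).mp hδ1
        rcases hw with rfl | hw
        · exact key1 δ1 hd1 hd2 hadj.symm
        · rw [Set.mem_setOf_eq, hLU, List.mem_map] at hw
          obtain ⟨δ2, hδ2, rfl⟩ := hw
          obtain ⟨he1, he2⟩ := (hmemLD δ2).mp hδ2
          by_cases heq : δ1 = δ2
          · subst heq; exact hadj.ne rfl
          · have hfne : δ1.fst ≠ δ2.fst := by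
              intro hfeq
              exact heq (List.inj_on_of_nodup_map (hLA ▸ hLA_nodup) hδ1 hδ2 hfeq)
            exact key2 δ1 δ2 hd1 he1 hfne hd2 he2 hadj
    have hcomp := numComp_indep G T hindep
    rw [hTcard] at hcomp
    have htough' := htough Tᶜ (by rw [hcomp]; omega)
    rw [hcomp] at htough'
    have hsum2 := hsum T
    rw [hTcard] at hsum2
    have hcompl : ((Tᶜ).ncard : ℝ) = (Fintype.card V : ℝ) - (LD.length + 1) := by
      have : ((LD.length + 1 : ℕ) + ((Tᶜ).ncard : ℕ) : ℝ) = (Fintype.card V : ℝ) := by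
        exact_mod_cast congrArg (Nat.cast : ℕ → ℝ) hsum2
      push_cast at this ⊢
      linarith
    rw [hcompl] at htough'
    have hlt : (Fintype.card V : ℝ) < ((LD.length : ℝ) + 1) * (t + 1) := by
      have h1 : (Fintype.card V : ℝ) / (t + 1) < (LD.length : ℝ) + 1 := by linarith
      exact (div_lt_iff₀ ht1).mp h1
    have hexp : ((LD.length : ℝ) + 1) * (t + 1) =
        t * ((LD.length : ℝ) + 1) + ((LD.length : ℝ) + 1) := by ring
    push_cast at htough'
    linarith
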